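/- arXiv:1904.03322 — 2 statements merged into one kernel-verified Lean document; each statement's English description precedes it below -/
import Mathlib

section
/- Let h be any constraint curve and let (x, g) be a price curve equilibrium. Define constraint curves f by f_j = h if g_j is identically zero, and f_j = g_j otherwise; define bids b by b_{ij} = β if g_j is identically zero and j ∈ R_i, b_{ij} = 0 if g_j is identically zero and j ∉ R_i, and b_{ij} = x_{ij} otherwise. Then b is a Nash equilibrium of ATP(f). -/
open scoped Classical
open Real

namespace BandwidthAlloc

/-- A bid: `none` denotes the special bid β; `some r` denotes the real bid `r ≥ 0`. -/
abbrev Bid := Option NNReal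

/-- Numeric value of a bid (β is treated as 0 in arithmetic). -/
noncomputable def bval (b : Bid) : ℝ := ((b.getD 0 : NNReal) : ℝ)

/-- A bid is positive when it is neither 0 nor β. -/
def posBid (b : Bid) : Prop := 0 < bval b

/-- Utility of the bundle `xi` for an agent with desired set `Ri`: `min_{j ∈ Ri} xi j`. -/
noncomputable def bundleUtil {m : ℕ} (Ri : Finset (Fin m)) (xi : Fin m → ℝ) : ℝ :=
  sInf (xi '' (Ri : Set (Fin m)))

/-- Bandwidth-allocation utility of agent `i` under allocation `x`. -/
noncomputable def util {n m : ℕ} (R : Fin n → Finset (Fin m))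
    (x : Fin n → Fin m → ℝ) (i : Fin n) : ℝ :=
  bundleUtil (R i) (x i)

/-- Weights: `w R i j = 1` iff `j ∈ R i`, else `0`. -/
noncomputable def w {n m : ℕ} (R : Fin n → Finset (Fin m)) (i : Fin n) (j : Fin m) : ℝ :=
  if j ∈ R i then 1 else 0

/-- A valid (nonnegative, supply-respecting) allocation. -/
def validAlloc {n m : ℕ} (s : Fin m → ℝ) (x : Fin n → Fin m → ℝ) : Prop :=
  (∀ i j, 0 ≤ x i j) ∧ ∀ j, ∑ i, x i j ≤ s j

/-- CES welfare of the utility vector `v` (`ρ = 0` is Nash welfare; for `ρ < 0` a zero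
utility yields welfare `0`, the limiting convention). -/
noncomputable def ces (ρ : ℝ) {n : ℕ} (v : Fin n → ℝ) : ℝ :=
  if ρ = 0 then ∏ i, v i
  else if ρ < 0 ∧ ∃ i, v i = 0 then 0
  else (∑ i, v i ^ ρ) ^ (1 / ρ)

/-- `Ψ_ρ`: `x` is a valid allocation maximizing CES welfare among valid allocations. -/
def maxCES (ρ : ℝ) {n m : ℕ} (s : Fin m → ℝ) (R : Fin n → Finset (Fin m))
    (x : Fin n → Fin m → ℝ) : Prop :=
  validAlloc s x ∧ ∀ y, validAlloc s y → ces ρ (util R y) ≤ ces ρ (util R x)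

/-- Constraint curve: continuous, normalized, strictly increasing, nonnegative on `[0,∞)`. -/
def IsConstraintCurve (f : ℝ → ℝ) : Prop :=
  ContinuousOn f (Set.Ici 0) ∧ f 0 = 0 ∧ StrictMonoOn f (Set.Ici 0) ∧
    ∀ y ∈ Set.Ici (0 : ℝ), 0 ≤ f y

/-- `g` is identically zero on `[0,∞)`. -/
def zeroOn (g : ℝ → ℝ) : Prop := ∀ y ∈ Set.Ici (0 : ℝ), g y = 0

/-- Price curve: continuous, normalized, nonnegative, and either strictly increasing or
identically zero on `[0,∞)`. -/
def IsPriceCurve (g : ℝ → ℝ) : Prop :=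
  ContinuousOn g (Set.Ici 0) ∧ g 0 = 0 ∧ (∀ y ∈ Set.Ici (0 : ℝ), 0 ≤ g y) ∧
    (StrictMonoOn g (Set.Ici 0) ∨ zeroOn g)

/-- Cost of the bundle `xi` under price curves `g`. -/
noncomputable def cost {m : ℕ} (g : Fin m → ℝ → ℝ) (xi : Fin m → ℝ) : ℝ :=
  ∑ j, g j (xi j)

/-- `xi` is in the demand set of an agent with desired set `Ri` under price curves `g`. -/
def inDemand {m : ℕ} (g : Fin m → ℝ → ℝ) (Ri : Finset (Fin m)) (xi : Fin m → ℝ) : Prop :=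
  (∀ j, 0 ≤ xi j) ∧ cost g xi ≤ 1 ∧
    ∀ yi : Fin m → ℝ, (∀ j, 0 ≤ yi j) → cost g yi ≤ 1 → bundleUtil Ri yi ≤ bundleUtil Ri xi

/-- Price curve equilibrium. -/
def isPCE {n m : ℕ} (s : Fin m → ℝ) (R : Fin n → Finset (Fin m))
    (x : Fin n → Fin m → ℝ) (g : Fin m → ℝ → ℝ) : Prop :=
  (∀ i, inDemand g (R i) (x i)) ∧ (∀ j, ∑ i, x i j ≤ s j) ∧
    ∀ j, ¬ zeroOn (g j) → ∑ i, x i j = s j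

/-- Step 1 of the ATP allocation rule: proportional sharing. -/
noncomputable def atp1 {n m : ℕ} (s : Fin m → ℝ) (b : Fin n → Fin m → Bid)
    (i : Fin n) (j : Fin m) : ℝ :=
  bval (b i j) / (∑ k, bval (b k j)) * s j

/-- Steps 1–2 of the ATP allocation rule: goods with a positive bid are shared
proportionally; on a good where everyone bids `0` or `β`, an agent bidding `β` receives
as much as she receives of some fixed good on which she bids positively. -/
noncomputable def atp2 {n m : ℕ} (s : Fin m → ℝ) (b : Fin n → Fin m → Bid)
    (i : Fin n) (j : Fin m) : ℝ :=
  if ∃ k, posBid (b k j) then atp1 s b i j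
  else if b i j = none then
    (if h : ∃ ℓ, posBid (b i ℓ) then atp1 s b i (Classical.choose h) else 0)
  else 0

/-- The full ATP allocation rule (steps 1–3): agents bidding `β` on an oversubscribed
step-2 good are penalized with the zero bundle. -/
noncomputable def atp {n m : ℕ} (s : Fin m → ℝ) (b : Fin n → Fin m → Bid)
    (i : Fin n) (j : Fin m) : ℝ :=
  if ∃ ℓ, (¬ ∃ k, posBid (b k ℓ)) ∧ b i ℓ = none ∧ s ℓ < ∑ k, atp2 s b k ℓ then 0
  else atp2 s b i j

/-- Total bid-constraint cost `C_f(b_i)` of agent `i`'s bid vector. -/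
noncomputable def bidCost {m : ℕ} (f : Fin m → ℝ → ℝ) (bi : Fin m → Bid) : ℝ :=
  ∑ j, f j (bval (bi j))

/-- A bid vector is feasible if it obeys the bid constraint `C_f(b_i) ≤ 1`. -/
def feasibleBid {m : ℕ} (f : Fin m → ℝ → ℝ) (bi : Fin m → Bid) : Prop :=
  bidCost f bi ≤ 1

/-- `b` is a Nash equilibrium of `ATP(f)`: all bids are feasible and no agent can
strictly increase her utility by a unilateral feasible deviation. -/
def isNE {n m : ℕ} (s : Fin m → ℝ) (f : Fin m → ℝ → ℝ)
    (R : Fin n → Finset (Fin m)) (b : Fin n → Fin m → Bid) : Prop :=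
  (∀ i, feasibleBid f (b i)) ∧
    ∀ (i : Fin n) (bi' : Fin m → Bid), feasibleBid f bi' →
      util R (atp s (Function.update b i bi')) i ≤ util R (atp s b) i

/-- `NE_X(ATP(f))`: allocations arising from Nash equilibrium bid profiles. -/
def NEX {n m : ℕ} (s : Fin m → ℝ) (f : Fin m → ℝ → ℝ)
    (R : Fin n → Finset (Fin m)) : Set (Fin n → Fin m → ℝ) :=
  {x | ∃ b, isNE s f R b ∧ x = atp s b}

/-- `f` is homogeneous of degree `α` on the nonnegative reals. -/
def Homog (f : ℝ → ℝ) (α : ℝ) : Prop :=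
  ∀ c ≥ (0 : ℝ), ∀ y ≥ (0 : ℝ), f (c * y) = c ^ α * f y

/-- `γ* = max {γ ≥ 0 : γ · Σ_i w_{ij} ≤ s_j for all j}` of Mechanism 1. -/
noncomputable def gammaStar {n m : ℕ} (s : Fin m → ℝ) (R : Fin n → Finset (Fin m)) : ℝ :=
  sSup {γ : ℝ | 0 ≤ γ ∧ ∀ j, γ * ∑ i, w R i j ≤ s j}

/-- Mechanism 1: `x i j = γ* · w i j`. -/
noncomputable def mech1 {n m : ℕ} (s : Fin m → ℝ) (R : Fin n → Finset (Fin m)) :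
    Fin n → Fin m → ℝ :=
  fun i j => gammaStar s R * w R i j

/-- `min_i u_i(x_i)`. -/
noncomputable def minUtil {n m : ℕ} (R : Fin n → Finset (Fin m))
    (x : Fin n → Fin m → ℝ) : ℝ :=
  sInf (Set.range fun i => util R x i)

/-- `x` is maxmin-optimal: valid and attaining the maximum of `min_i u_i` over valid
allocations. -/
def maxminOptimal {n m : ℕ} (s : Fin m → ℝ) (R : Fin n → Finset (Fin m))
    (x : Fin n → Fin m → ℝ) : Prop :=
  validAlloc s x ∧ ∀ y, validAlloc s y → minUtil R y ≤ minUtil R x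

/-- Mechanism 2: `P i k` is the set agent `i` claims agent `k` desires.
`eta P i = |{k : R_k(k) ≠ R_k(i)}|`. -/
noncomputable def eta {n m : ℕ} (P : Fin n → Fin n → Finset (Fin m)) (i : Fin n) : ℕ :=
  (Finset.univ.filter fun k => P k k ≠ P i k).card

/-- Agent `i` is in `N̄`: for some `k`, `R_k(k) ⊊ R_k(i)`. -/
def inNbar {n m : ℕ} (P : Fin n → Fin n → Finset (Fin m)) (i : Fin n) : Prop :=
  ∃ k, P k k ⊂ P i k

/-- The penalty factor `α_i` of Mechanism 2. -/
noncomputable def alpha {n m : ℕ} (P : Fin n → Fin n → Finset (Fin m)) (i : Fin n) : ℝ :=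
  if inNbar P i then 0 else 1 - (eta P i : ℝ) / n

/-- Effective reported sets of Mechanism 2: agents in `N̄` are replaced by `∅`. -/
noncomputable def effSets {n m : ℕ} (P : Fin n → Fin n → Finset (Fin m)) :
    Fin n → Finset (Fin m) :=
  fun i => if inNbar P i then ∅ else P i i

/-- Mechanism 2: the allocation `x_i = α_i · y_i` where `y` is the Mechanism 1 outcome
on the effective sets. -/
noncomputable def mech2 {n m : ℕ} (s : Fin m → ℝ) (P : Fin n → Fin n → Finset (Fin m)) :
    Fin n → Fin m → ℝ :=
  fun i j => alpha P i * mech1 s (effSets P) i j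


/-! ### Auxiliary lemmas -/

section Aux

lemma bundleUtil_le {m : ℕ} {Ri : Finset (Fin m)} {f : Fin m → ℝ} {j : Fin m}
    (hj : j ∈ Ri) : bundleUtil Ri f ≤ f j :=
  csInf_le ((Ri.finite_toSet.image f).bddBelow) ⟨j, by simpa using hj, rfl⟩

lemma le_bundleUtil {m : ℕ} {Ri : Finset (Fin m)} (hRi : Ri.Nonempty) {f : Fin m → ℝ}
    {a : ℝ} (ha : ∀ j ∈ Ri, a ≤ f j) : a ≤ bundleUtil Ri f := by
  apply le_csInf
  · obtain ⟨j, hj⟩ := hRi; exact ⟨f j, j, by simpa using hj, rfl⟩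
  · rintro c ⟨j, hj, rfl⟩; exact ha j (by simpa using hj)

lemma bundleUtil_congr {m : ℕ} {Ri : Finset (Fin m)} {f f' : Fin m → ℝ}
    (hf : ∀ j ∈ Ri, f j = f' j) : bundleUtil Ri f = bundleUtil Ri f' := by
  unfold bundleUtil
  congr 1
  ext y
  constructor <;> rintro ⟨j, hj, rfl⟩
  · exact ⟨j, hj, (hf j (by simpa using hj)).symm⟩
  · exact ⟨j, hj, hf j (by simpa using hj)⟩

lemma bval_nonneg (c : Bid) : 0 ≤ bval c := (c.getD 0).coe_nonneg

lemma atp1_nonneg {n m : ℕ} {s : Fin m → ℝ} (hs : ∀ j, 0 ≤ s j)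
    (b : Fin n → Fin m → Bid) (i : Fin n) (j : Fin m) : 0 ≤ atp1 s b i j :=
  mul_nonneg (div_nonneg (bval_nonneg _) (Finset.sum_nonneg fun k _ => bval_nonneg _)) (hs j)

lemma atp2_nonneg {n m : ℕ} {s : Fin m → ℝ} (hs : ∀ j, 0 ≤ s j)
    (b : Fin n → Fin m → Bid) (i : Fin n) (j : Fin m) : 0 ≤ atp2 s b i j := by
  unfold atp2
  split_ifs
  all_goals first | exact atp1_nonneg hs b i _ | exact le_rfl

/-- The improvement lemma: a demanded bundle cannot be (weakly) beaten by a bundle of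
cost strictly less than 1, since the latter could be uniformly improved on the desired
goods. -/
lemma pce_slack {m : ℕ} {g : Fin m → ℝ → ℝ} (hg : ∀ j, IsPriceCurve (g j))
    {Ri : Finset (Fin m)} (hRi : Ri.Nonempty) {xi : Fin m → ℝ}
    (hxi : inDemand g Ri xi) {z : Fin m → ℝ} (hz0 : ∀ j, 0 ≤ z j)
    (hzc : cost g z < 1) (hzu : bundleUtil Ri xi ≤ bundleUtil Ri z) : False := by
  have hδ : 0 < 1 - cost g z := by linarith
  set F : ℝ → ℝ := fun ε => ∑ j ∈ Ri, g j (z j + ε) with hF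
  have hFc : ContinuousWithinAt F (Set.Ici 0) 0 := by
    have key : ∀ j ∈ Ri, ContinuousWithinAt (fun ε : ℝ => g j (z j + ε)) (Set.Ici 0) 0 := by
      intro j _
      have h1 : ContinuousWithinAt (g j) (Set.Ici 0) ((fun ε : ℝ => z j + ε) 0) := by
        simpa using (hg j).1 (z j) (hz0 j)
      have h2 : ContinuousWithinAt (fun ε : ℝ => z j + ε) (Set.Ici 0) 0 :=
        (continuous_const.add continuous_id).continuousWithinAt
      exact h1.comp h2 (fun ε hε => add_nonneg (hz0 j) hε)
    have h3 := tendsto_finset_sum Ri key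
    simpa [ContinuousWithinAt, hF] using h3
  have hev : ∀ᶠ ε in nhdsWithin (0 : ℝ) (Set.Ici 0), F ε < F 0 + (1 - cost g z) :=
    hFc.eventually_lt_const (by linarith)
  have hmono : nhdsWithin (0 : ℝ) (Set.Ioi 0) ≤ nhdsWithin 0 (Set.Ici 0) :=
    nhdsWithin_mono _ Set.Ioi_subset_Ici_self
  have hev2 : ∀ᶠ ε in nhdsWithin (0 : ℝ) (Set.Ioi 0),
      F ε < F 0 + (1 - cost g z) ∧ ε ∈ Set.Ioi (0 : ℝ) :=
    (hev.filter_mono hmono).and self_mem_nhdsWithin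
  obtain ⟨ε, hε1, hε2⟩ := hev2.exists
  have hεpos : 0 < ε := hε2
  set y : Fin m → ℝ := fun j => if j ∈ Ri then z j + ε else z j with hy
  have hy0 : ∀ j, 0 ≤ y j := by
    intro j
    by_cases hj : j ∈ Ri
    · simp only [hy, if_pos hj]; linarith [hz0 j]
    · simp only [hy, if_neg hj]; exact hz0 j
  have hyc : cost g y = cost g z + (F ε - F 0) := by
    unfold cost
    have hterm : ∀ j, g j (y j)
        = g j (z j) + (if j ∈ Ri then g j (z j + ε) - g j (z j) else 0) := by
      intro j
      by_cases hj : j ∈ Ri <;> simp [hy, hj]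
    calc (∑ j, g j (y j))
        = ∑ j, (g j (z j) + (if j ∈ Ri then g j (z j + ε) - g j (z j) else 0)) :=
          Finset.sum_congr rfl fun j _ => hterm j
      _ = (∑ j, g j (z j)) + ∑ j ∈ Ri, (g j (z j + ε) - g j (z j)) := by
          rw [Finset.sum_add_distrib, Finset.sum_ite_mem, Finset.univ_inter]
      _ = (∑ j, g j (z j)) + (F ε - F 0) := by
          rw [Finset.sum_sub_distrib]; simp [hF]
  have hyc1 : cost g y ≤ 1 := by rw [hyc]; linarith
  have hyu : bundleUtil Ri z + ε ≤ bundleUtil Ri y := by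
    apply le_bundleUtil hRi
    intro j hj
    have := bundleUtil_le (f := z) hj
    simp only [hy, hj, if_true]
    linarith
  have hdem := hxi.2.2 y hy0 hyc1
  linarith

/-- P1: every agent desires some good with a non-trivial price curve. -/
lemma pce_exists_nonzero {m : ℕ} {g : Fin m → ℝ → ℝ} (hg : ∀ j, IsPriceCurve (g j))
    {Ri : Finset (Fin m)} (hRi : Ri.Nonempty) {xi : Fin m → ℝ}
    (hxi : inDemand g Ri xi) : ∃ j ∈ Ri, ¬ zeroOn (g j) := by
  by_contra hcon
  push_neg at hcon
  set z : Fin m → ℝ := fun j => if j ∈ Ri then xi j else 0 with hz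
  have hz0 : ∀ j, 0 ≤ z j := by
    intro j; by_cases hj : j ∈ Ri <;> simp [hz, hj, hxi.1 j]
  refine pce_slack hg hRi hxi hz0 ?_ ?_
  · have : cost g z = 0 := by
      unfold cost
      apply Finset.sum_eq_zero
      intro j _
      by_cases hj : j ∈ Ri
      · simp only [hz, hj, if_true]
        exact hcon j hj (xi j) (hxi.1 j)
      · simp only [hz, hj, if_false]
        exact (hg j).2.1
    linarith
  · exact le_of_eq (bundleUtil_congr fun j hj => by simp [hz, hj])

/-- P3: in a demanded bundle, no agent holds a positive amount of an undesired good
with a non-trivial price curve. -/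
lemma pce_no_junk {m : ℕ} {g : Fin m → ℝ → ℝ} (hg : ∀ j, IsPriceCurve (g j))
    {Ri : Finset (Fin m)} (hRi : Ri.Nonempty) {xi : Fin m → ℝ}
    (hxi : inDemand g Ri xi) {j : Fin m} (hj : j ∉ Ri) (hnz : ¬ zeroOn (g j)) :
    xi j = 0 := by
  by_contra hne
  have hpos : 0 < xi j := lt_of_le_of_ne (hxi.1 j) (Ne.symm hne)
  have hmono : StrictMonoOn (g j) (Set.Ici 0) := (hg j).2.2.2.resolve_right hnz
  have hgpos : 0 < g j (xi j) := by
    have := hmono (Set.self_mem_Ici) (Set.mem_Ici.2 (hxi.1 j)) hpos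
    rwa [(hg j).2.1] at this
  set z : Fin m → ℝ := fun ℓ => if ℓ ∈ Ri then xi ℓ else 0 with hz
  have hz0 : ∀ ℓ, 0 ≤ z ℓ := by
    intro ℓ; by_cases hℓ : ℓ ∈ Ri <;> simp [hz, hℓ, hxi.1 ℓ]
  refine pce_slack hg hRi hxi hz0 ?_ ?_
  · have hle : cost g z + g j (xi j) ≤ cost g xi := by
      unfold cost
      have hterm : ∀ ℓ, g ℓ (z ℓ) + (if ℓ = j then g j (xi j) else 0) ≤ g ℓ (xi ℓ) := by
        intro ℓ
        by_cases hℓ : ℓ ∈ Ri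
        · have hℓj : ℓ ≠ j := fun hcontra => hj (hcontra ▸ hℓ)
          simp [hz, hℓ, hℓj]
        · by_cases hℓj : ℓ = j
          · subst hℓj
            simp [hz, hℓ, (hg ℓ).2.1]
          · simp only [hz, hℓ, if_false, hℓj]
            rw [(hg ℓ).2.1]
            simpa using (hg ℓ).2.2.1 (xi ℓ) (hxi.1 ℓ)
      calc (∑ ℓ, g ℓ (z ℓ)) + g j (xi j)
          = ∑ ℓ, (g ℓ (z ℓ) + (if ℓ = j then g j (xi j) else 0)) := by
            rw [Finset.sum_add_distrib, Finset.sum_ite_eq' Finset.univ j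
              (fun _ => g j (xi j))]
            simp
        _ ≤ ∑ ℓ, g ℓ (xi ℓ) := Finset.sum_le_sum fun ℓ _ => hterm ℓ
    have := hxi.2.1
    linarith
  · exact le_of_eq (bundleUtil_congr fun ℓ hℓ => by simp [hz, hℓ])

/-- P2: in a demanded bundle, the amount held of any desired good with a non-trivial
price curve equals the utility (the min). -/
lemma pce_eq_min {m : ℕ} {g : Fin m → ℝ → ℝ} (hg : ∀ j, IsPriceCurve (g j))
    {Ri : Finset (Fin m)} (hRi : Ri.Nonempty) {xi : Fin m → ℝ}
    (hxi : inDemand g Ri xi) {j : Fin m} (hj : j ∈ Ri) (hnz : ¬ zeroOn (g j)) :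
    xi j = bundleUtil Ri xi := by
  set u := bundleUtil Ri xi with hu
  have hule : u ≤ xi j := bundleUtil_le hj
  have hu0 : 0 ≤ u := le_bundleUtil hRi fun ℓ _ => hxi.1 ℓ
  by_contra hne
  have hlt : u < xi j := lt_of_le_of_ne hule (Ne.symm hne)
  have hmono : StrictMonoOn (g j) (Set.Ici 0) := (hg j).2.2.2.resolve_right hnz
  set z : Fin m → ℝ := fun ℓ => if ℓ = j then u else if ℓ ∈ Ri then xi ℓ else 0 with hz
  have hz0 : ∀ ℓ, 0 ≤ z ℓ := by
    intro ℓ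
    by_cases hℓj : ℓ = j
    · simp [hz, hℓj, hu0]
    · by_cases hℓ : ℓ ∈ Ri <;> simp [hz, hℓj, hℓ, hxi.1 ℓ]
  refine pce_slack hg hRi hxi hz0 ?_ ?_
  · have hlt2 : cost g z < cost g xi := by
      unfold cost
      apply Finset.sum_lt_sum
      · intro ℓ _
        by_cases hℓj : ℓ = j
        · subst hℓj
          simp only [hz, if_pos rfl]
          exact le_of_lt (hmono (Set.mem_Ici.2 hu0) (Set.mem_Ici.2 (hxi.1 ℓ)) hlt)
        · by_cases hℓ : ℓ ∈ Ri
          · simp [hz, hℓj, hℓ]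
          · simp only [hz, hℓj, hℓ, if_false]
            rw [(hg ℓ).2.1]
            exact (hg ℓ).2.2.1 (xi ℓ) (hxi.1 ℓ)
      · refine ⟨j, Finset.mem_univ j, ?_⟩
        simp only [hz, if_pos rfl]
        exact hmono (Set.mem_Ici.2 hu0) (Set.mem_Ici.2 (hxi.1 j)) hlt
    have := hxi.2.1
    linarith
  · apply le_bundleUtil hRi
    intro ℓ hℓ
    by_cases hℓj : ℓ = j
    · simp [hz, hℓj]; exact hu.symm.le
    · simp only [hz, hℓj, hℓ, if_false, if_true]
      exact bundleUtil_le hℓ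

end Aux

/-- any price curve equilibrium `(x, g)` can be transformed into a Nash
equilibrium of `ATP(f)`, where `f_j = h` when `g_j ≡ 0` and `f_j = g_j` otherwise, and
bids are `β`/`0` on zero-priced goods (according to desire) and `x_{ij}` otherwise. -/
theorem pc_to_tp {n m : ℕ} (s : Fin m → ℝ) (hs : ∀ j, 0 < s j)
    (R : Fin n → Finset (Fin m)) (hR : ∀ i, (R i).Nonempty)
    (hcov : ∀ j, ∃ i, j ∈ R i)
    (h : ℝ → ℝ) (hh : IsConstraintCurve h)
    (g : Fin m → ℝ → ℝ) (hg : ∀ j, IsPriceCurve (g j))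
    (x : Fin n → Fin m → ℝ) (hx : isPCE s R x g) :
    isNE s (fun j => if zeroOn (g j) then h else g j) R
      (fun i j => if zeroOn (g j) then (if j ∈ R i then none else some 0)
        else some (x i j).toNNReal) := by
  classical
  obtain ⟨hdem, hsup, heq⟩ := hx
  set f : Fin m → ℝ → ℝ := fun j => if zeroOn (g j) then h else g j with hfdef
  set b : Fin n → Fin m → Bid := fun i j =>
    if zeroOn (g j) then (if j ∈ R i then none else some 0)
    else some (x i j).toNNReal with hbdef
  have hx0 : ∀ i j, 0 ≤ x i j := fun i j => (hdem i).1 j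
  have hs0 : ∀ j, 0 ≤ s j := fun j => (hs j).le
  have hu0 : ∀ i, 0 ≤ util R x i := fun i => le_bundleUtil (hR i) fun j _ => hx0 i j
  have hule : ∀ i, ∀ j ∈ R i, util R x i ≤ x i j := fun i j hj => bundleUtil_le hj
  have hP2 : ∀ i, ∀ j ∈ R i, ¬ zeroOn (g j) → x i j = util R x i :=
    fun i j hj hnz => pce_eq_min hg (hR i) (hdem i) hj hnz
  have hP3 : ∀ i j, j ∉ R i → ¬ zeroOn (g j) → x i j = 0 :=
    fun i j hj hnz => pce_no_junk hg (hR i) (hdem i) hj hnz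
  have hbeq : ∀ k j, b k j = if zeroOn (g j) then (if j ∈ R k then none else some 0)
      else some (x k j).toNNReal := fun k j => by rw [hbdef]
  have hbval : ∀ k j, bval (b k j) = if zeroOn (g j) then 0 else x k j := by
    intro k j
    by_cases hz : zeroOn (g j)
    · rw [if_pos hz]
      by_cases hjR : j ∈ R k
      · rw [hbeq k j, if_pos hz, if_pos hjR]; rfl
      · rw [hbeq k j, if_pos hz, if_neg hjR]; rfl
    · rw [if_neg hz, hbeq k j, if_neg hz]
      exact Real.coe_toNNReal _ (hx0 k j)
  have hpos : ∀ k j, posBid (b k j) ↔ (¬ zeroOn (g j) ∧ 0 < x k j) := by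
    intro k j
    unfold posBid
    rw [hbval]
    by_cases hz : zeroOn (g j)
    · rw [if_pos hz]; simp [hz]
    · rw [if_neg hz]; simp [hz]
  have hsumb : ∀ j, ¬ zeroOn (g j) → (∑ k, bval (b k j)) = s j := by
    intro j hz
    rw [Finset.sum_congr rfl fun k _ => hbval k j]
    simp only [if_neg hz]
    exact heq j hz
  have hxle : ∀ i j, ¬ zeroOn (g j) → x i j ≤ s j := by
    intro i j hz
    rw [← heq j hz]
    exact Finset.single_le_sum (fun k _ => hx0 k j) (Finset.mem_univ i)
  have hatp1 : ∀ k j, ¬ zeroOn (g j) → atp1 s b k j = x k j := by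
    intro k j hz
    unfold atp1
    rw [hbval, hsumb j hz, if_neg hz, div_mul_cancel₀ _ (hs j).ne']
  have hatp2 : ∀ k j, atp2 s b k j
      = if zeroOn (g j) then (if j ∈ R k then util R x k else 0) else x k j := by
    intro k j
    by_cases hz : zeroOn (g j)
    · have hnp : ¬ ∃ t, posBid (b t j) := by
        rintro ⟨t, ht⟩
        exact ((hpos t j).1 ht).1 hz
      rw [if_pos hz]
      by_cases hjR : j ∈ R k
      · have hbn : b k j = none := by rw [hbeq k j, if_pos hz, if_pos hjR]
        rw [if_pos hjR]
        unfold atp2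
        rw [if_neg hnp, if_pos hbn]
        by_cases hp : ∃ ℓ, posBid (b k ℓ)
        · rw [dif_pos hp]
          obtain ⟨hznℓ, hxp⟩ := (hpos k (Classical.choose hp)).1 (Classical.choose_spec hp)
          have hr : Classical.choose hp ∈ R k := by
            by_contra hnot
            rw [hP3 k _ hnot hznℓ] at hxp
            exact lt_irrefl 0 hxp
          rw [hatp1 k _ hznℓ, hP2 k _ hr hznℓ]
        · rw [dif_neg hp]
          obtain ⟨ℓ0, hℓ0R, hℓ0nz⟩ := pce_exists_nonzero hg (hR k) (hdem k)
          have hx0' : x k ℓ0 = 0 := by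
            by_contra hne
            exact hp ⟨ℓ0, (hpos k ℓ0).2 ⟨hℓ0nz, lt_of_le_of_ne (hx0 k ℓ0) (Ne.symm hne)⟩⟩
          have h5 := hP2 k ℓ0 hℓ0R hℓ0nz
          linarith
      · have hbz : ¬ b k j = none := by
          rw [hbeq k j, if_pos hz, if_neg hjR]
          exact Option.some_ne_none _
        rw [if_neg hjR]
        unfold atp2
        rw [if_neg hnp, if_neg hbz]
    · have hex : ∃ t, posBid (b t j) := by
        by_contra hne
        push_neg at hne
        have hall : ∀ t, x t j = 0 := by
          intro t
          by_contra hne2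
          exact hne t ((hpos t j).2 ⟨hz, lt_of_le_of_ne (hx0 t j) (Ne.symm hne2)⟩)
        have h6 := heq j hz
        rw [Finset.sum_eq_zero fun t _ => hall t] at h6
        exact absurd h6.symm (ne_of_gt (hs j))
      rw [if_neg hz]
      unfold atp2
      rw [if_pos hex]
      exact hatp1 k j hz
  have hstep3 : ∀ i, ¬ ∃ ℓ, (¬ ∃ t, posBid (b t ℓ)) ∧ b i ℓ = none
      ∧ s ℓ < ∑ t, atp2 s b t ℓ := by
    intro i
    rintro ⟨ℓ, hnp, hbn, hlt⟩
    have hz : zeroOn (g ℓ) := by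
      by_contra hz
      rw [hbeq i ℓ, if_neg hz] at hbn
      exact Option.some_ne_none _ hbn
    have hle : ∑ t, atp2 s b t ℓ ≤ s ℓ := by
      calc ∑ t, atp2 s b t ℓ ≤ ∑ t, x t ℓ := by
            apply Finset.sum_le_sum
            intro t _
            rw [hatp2 t ℓ, if_pos hz]
            by_cases hjR : ℓ ∈ R t
            · rw [if_pos hjR]; exact hule t ℓ hjR
            · rw [if_neg hjR]; exact hx0 t ℓ
        _ ≤ s ℓ := hsup ℓ
    linarith
  have hatpb : ∀ i j, atp s b i j = atp2 s b i j := by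
    intro i j; unfold atp; rw [if_neg (hstep3 i)]
  have hutilb : ∀ i, util R (atp s b) i = util R x i := by
    intro i
    have hent : ∀ j ∈ R i, atp s b i j = util R x i := by
      intro j hj
      rw [hatpb, hatp2]
      by_cases hz : zeroOn (g j)
      · rw [if_pos hz, if_pos hj]
      · rw [if_neg hz]; exact hP2 i j hj hz
    apply le_antisymm
    · obtain ⟨j0, hj0⟩ := hR i
      calc util R (atp s b) i ≤ atp s b i j0 := bundleUtil_le hj0
        _ = util R x i := hent j0 hj0
    · exact le_bundleUtil (hR i) fun j hj => le_of_eq (hent j hj).symm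
  constructor
  · -- feasibility of the equilibrium bids
    intro i
    have hterm : ∀ j, f j (bval (b i j)) = if zeroOn (g j) then 0 else g j (x i j) := by
      intro j
      rw [hbval]
      by_cases hz : zeroOn (g j) <;> simp [hfdef, hz, hh.2.1]
    have hcalc : bidCost f (b i) ≤ 1 := by
      unfold bidCost
      calc (∑ j, f j (bval (b i j)))
          = ∑ j, (if zeroOn (g j) then 0 else g j (x i j)) :=
            Finset.sum_congr rfl fun j _ => hterm j
        _ ≤ ∑ j, g j (x i j) := by
            apply Finset.sum_le_sum
            intro j _
            by_cases hz : zeroOn (g j)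
            · rw [if_pos hz]
              exact (hg j).2.2.1 _ (hx0 i j)
            · rw [if_neg hz]
        _ ≤ 1 := (hdem i).2.1
    exact hcalc
  · -- no profitable deviation
    intro i bi' hfeas
    rw [hutilb i]
    set b' := Function.update b i bi' with hb'def
    have hb'i : ∀ j, b' i j = bi' j := fun j => by rw [hb'def, Function.update_self]
    have hb'k : ∀ k, k ≠ i → ∀ j, b' k j = b k j := fun k hk j => by
      rw [hb'def, Function.update_of_ne hk]
    by_cases hc : ∃ ℓ, (¬ ∃ t, posBid (b' t ℓ)) ∧ b' i ℓ = none
        ∧ s ℓ < ∑ t, atp2 s b' t ℓ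
    · obtain ⟨j0, hj0⟩ := hR i
      have h0 : atp s b' i j0 = 0 := by unfold atp; rw [if_pos hc]
      calc util R (atp s b') i ≤ atp s b' i j0 := bundleUtil_le hj0
        _ = 0 := h0
        _ ≤ util R x i := hu0 i
    · have hatp' : ∀ j, atp s b' i j = atp2 s b' i j := fun j => by
        unfold atp; rw [if_neg hc]
      by_contra hcon
      push_neg at hcon
      have hent : ∀ j ∈ R i, util R x i < atp2 s b' i j := by
        intro j hj
        calc util R x i < util R (atp s b') i := hcon
          _ ≤ atp s b' i j := bundleUtil_le hj
          _ = atp2 s b' i j := hatp' j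
      have hsumb' : ∀ j, ¬ zeroOn (g j) →
          (∑ k, bval (b' k j)) = bval (bi' j) + (s j - x i j) := by
        intro j hz
        rw [← Finset.add_sum_erase _ _ (Finset.mem_univ i), hb'i j]
        congr 1
        have hcg : ∀ k ∈ Finset.univ.erase i, bval (b' k j) = x k j := by
          intro k hk
          rw [hb'k k (Finset.mem_erase.1 hk).1 j, hbval, if_neg hz]
        rw [Finset.sum_congr rfl hcg]
        have h2 : x i j + ∑ k ∈ Finset.univ.erase i, x k j = s j :=
          (Finset.add_sum_erase Finset.univ (fun k => x k j)
            (Finset.mem_univ i)).trans (heq j hz)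
        linarith
      have hkey : ∀ j ∈ R i, ¬ zeroOn (g j) →
          g j (atp2 s b' i j) ≤ f j (bval (bi' j)) := by
        intro j hj hz
        have he := hent j hj
        have hxij : x i j = util R x i := hP2 i j hj hz
        have hfj : ∀ y : ℝ, f j y = g j y := by intro y; simp [hfdef, hz]
        rw [hfj]
        by_cases hbp : 0 < bval (bi' j)
        · have hexp : ∃ t, posBid (b' t j) := ⟨i, by
            unfold posBid; rw [hb'i j]; exact hbp⟩
          have ha2 : atp2 s b' i j
              = bval (bi' j) / (bval (bi' j) + (s j - x i j)) * s j := by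
            unfold atp2
            rw [if_pos hexp]
            unfold atp1
            rw [hsumb' j hz, hb'i j]
          have hxs : x i j ≤ s j := hxle i j hz
          have hden : 0 < bval (bi' j) + (s j - x i j) := by linarith
          have hxt : x i j ≤ bval (bi' j) := by
            by_contra hlt
            push_neg at hlt
            have hle2 : atp2 s b' i j ≤ x i j := by
              rw [ha2, div_mul_eq_mul_div, div_le_iff₀ hden]
              nlinarith [mul_nonneg (sub_nonneg.2 hxs) (sub_nonneg.2 hlt.le)]
            rw [hxij] at hle2
            linarith
          have hle3 : atp2 s b' i j ≤ bval (bi' j) := by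
            rw [ha2, div_mul_eq_mul_div, div_le_iff₀ hden]
            nlinarith [mul_nonneg (bval_nonneg (bi' j)) (sub_nonneg.2 hxt)]
          exact ((hg j).2.2.2.resolve_right hz).monotoneOn
            (Set.mem_Ici.2 (atp2_nonneg hs0 b' i j))
            (Set.mem_Ici.2 (bval_nonneg _)) hle3
        · exfalso
          have hb0 : bval (bi' j) = 0 := le_antisymm (not_lt.1 hbp) (bval_nonneg _)
          by_cases hbn : bi' j = none
          · by_cases hexp : ∃ t, posBid (b' t j)
            · have h7 : atp2 s b' i j = 0 := by
                unfold atp2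
                rw [if_pos hexp]
                unfold atp1
                rw [hb'i j, hb0, zero_div, zero_mul]
              rw [h7] at he
              linarith [hu0 i]
            · have hxk : ∀ k, k ≠ i → x k j = 0 := by
                intro k hk
                by_contra hne
                refine hexp ⟨k, ?_⟩
                unfold posBid
                rw [hb'k k hk j, hbval, if_neg hz]
                exact lt_of_le_of_ne (hx0 k j) (Ne.symm hne)
              have hxs : x i j = s j := by
                have h2 : x i j + ∑ k ∈ Finset.univ.erase i, x k j = s j :=
                  (Finset.add_sum_erase Finset.univ (fun k => x k j)
                    (Finset.mem_univ i)).trans (heq j hz)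
                have h3 : ∑ k ∈ Finset.univ.erase i, x k j = 0 :=
                  Finset.sum_eq_zero fun k hk => hxk k (Finset.mem_erase.1 hk).1
                linarith
              have hns : ∑ t, atp2 s b' t j ≤ s j := by
                by_contra hlt2
                push_neg at hlt2
                exact hc ⟨j, hexp, (hb'i j).trans hbn, hlt2⟩
              have hsingle : atp2 s b' i j ≤ ∑ t, atp2 s b' t j :=
                Finset.single_le_sum (fun t _ => atp2_nonneg hs0 b' t j)
                  (Finset.mem_univ i)
              linarith
          · have hbb : ¬ b' i j = none := by rw [hb'i j]; exact hbn
            have h8 : atp2 s b' i j = 0 := by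
              unfold atp2
              by_cases h1 : ∃ t, posBid (b' t j)
              · rw [if_pos h1]; unfold atp1; rw [hb'i j, hb0, zero_div, zero_mul]
              · rw [if_neg h1, if_neg hbb]
            rw [h8] at he
            linarith [hu0 i]
      set z : Fin m → ℝ := fun j => if j ∈ R i then atp2 s b' i j else 0 with hzdef
      have hz0 : ∀ j, 0 ≤ z j := by
        intro j
        by_cases hj : j ∈ R i
        · simp only [hzdef, if_pos hj]; exact atp2_nonneg hs0 b' i j
        · simp only [hzdef, if_neg hj]; exact le_rfl
      have hzc : cost g z ≤ 1 := by
        have hb1 : ∀ j, g j (z j) ≤ f j (bval (bi' j)) := by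
          intro j
          by_cases hzo : zeroOn (g j)
          · have h1 : g j (z j) = 0 := hzo (z j) (hz0 j)
            have h2 : 0 ≤ f j (bval (bi' j)) := by
              simp only [hfdef, if_pos hzo]
              exact hh.2.2.2 _ (bval_nonneg _)
            linarith
          · by_cases hj : j ∈ R i
            · have h9 : z j = atp2 s b' i j := by simp only [hzdef, if_pos hj]
              rw [h9]
              exact hkey j hj hzo
            · have h9 : z j = 0 := by simp only [hzdef, if_neg hj]
              rw [h9, (hg j).2.1]
              simp only [hfdef, if_neg hzo]
              exact (hg j).2.2.1 _ (bval_nonneg _)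
        calc cost g z ≤ ∑ j, f j (bval (bi' j)) := Finset.sum_le_sum fun j _ => hb1 j
          _ ≤ 1 := hfeas
      have hdz := (hdem i).2.2 z hz0 hzc
      have h1 : bundleUtil (R i) z = bundleUtil (R i) (fun j => atp2 s b' i j) :=
        bundleUtil_congr fun j hj => by simp only [hzdef]; rw [if_pos hj]
      have h2 : util R (atp s b') i = bundleUtil (R i) (fun j => atp2 s b' i j) :=
        bundleUtil_congr fun j _ => hatp' j
      have h3 : util R x i < bundleUtil (R i) z := by
        rw [h1, ← h2]; exact hcon
      have hud : bundleUtil (R i) (x i) = util R x i := rfl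
      rw [hud] at hdz
      linarith

end BandwidthAlloc
end

section
/- In the 5-agent, 7-good instance with desired sets R_1 = {1,2,7}, R_2 = {3,4,7}, R_3 = {5,6,7}, R_4 = {1,3,5}, R_5 = {2,4,6}, supplies s_7 = 2 and s_j = 1 for j ≠ 7: for every ρ ∈ (-∞, 1] (with ρ = 0 interpreted as Nash welfare), every allocation x ∈ Ψ_ρ(u) satisfies u_4(x_4) < 1/2. -/
open scoped Classical
open Real

namespace BandwidthAlloc

/-! ### Auxiliary lemmas for `truthful_less_half` -/

open Filter Set in
private lemma aux_bundleUtil_le {m : ℕ} {Ri : Finset (Fin m)} {xi : Fin m → ℝ} {j : Fin m}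
    (hj : j ∈ Ri) : bundleUtil Ri xi ≤ xi j :=
  csInf_le (((Ri : Set (Fin m)).toFinite.image xi).bddBelow) ⟨j, Finset.mem_coe.mpr hj, rfl⟩

private lemma aux_le_bundleUtil {m : ℕ} {Ri : Finset (Fin m)} {xi : Fin m → ℝ} {c : ℝ}
    (hne : Ri.Nonempty) (h : ∀ j ∈ Ri, c ≤ xi j) : c ≤ bundleUtil Ri xi := by
  obtain ⟨j, hj⟩ := hne
  refine le_csInf ⟨xi j, ⟨j, Finset.mem_coe.mpr hj, rfl⟩⟩ ?_
  rintro b ⟨k, hk, rfl⟩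
  exact h k (Finset.mem_coe.mp hk)

private lemma aux_bundleUtil_eq {m : ℕ} {Ri : Finset (Fin m)} {xi : Fin m → ℝ} {c : ℝ}
    (hne : Ri.Nonempty) (h : ∀ j ∈ Ri, xi j = c) : bundleUtil Ri xi = c := by
  obtain ⟨j, hj⟩ := hne
  exact le_antisymm (le_of_le_of_eq (aux_bundleUtil_le hj) (h j hj))
    (aux_le_bundleUtil ⟨j, hj⟩ fun k hk => (h k hk).ge)

private lemma aux_pair_rpow_le {ρ a b : ℝ} (hρ : 0 < ρ) (hρ1 : ρ ≤ 1) (ha : 0 ≤ a) (hb : 0 ≤ b)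
    (hab : a + b ≤ 1) : a ^ ρ + b ^ ρ ≤ 2 * (1/2 : ℝ) ^ ρ := by
  have hinv : 1 ≤ ρ⁻¹ := by
    have h1 : ρ * ρ⁻¹ = 1 := mul_inv_cancel₀ hρ.ne'
    nlinarith [inv_pos.2 hρ]
  have h := Real.arith_mean_le_rpow_mean (Finset.univ : Finset (Fin 2)) ![1/2, 1/2]
    ![a ^ ρ, b ^ ρ] (by intro i _; fin_cases i <;> norm_num)
    (by simp [Fin.sum_univ_two]; norm_num)
    (by intro i _; fin_cases i
        · exact Real.rpow_nonneg ha ρ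
        · exact Real.rpow_nonneg hb ρ) (p := ρ⁻¹) hinv
  simp only [Fin.sum_univ_two, Matrix.cons_val_zero, Matrix.cons_val_one, Matrix.head_cons] at h
  rw [Real.rpow_rpow_inv ha hρ.ne', Real.rpow_rpow_inv hb hρ.ne',
    show (1:ℝ)/ρ⁻¹ = ρ from by field_simp] at h
  have h2 : (1/2 * a + 1/2 * b : ℝ) ^ ρ ≤ (1/2 : ℝ) ^ ρ :=
    Real.rpow_le_rpow (by linarith) (by linarith) hρ.le
  linarith

private lemma aux_pair_rpow_ge {ρ a b : ℝ} (hρ : ρ < 0) (ha : 0 < a) (hb : 0 < b)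
    (hab : a + b ≤ 1) : 2 * (1/2 : ℝ) ^ ρ ≤ a ^ ρ + b ^ ρ := by
  have hAB : a * b ≤ 1/4 := by nlinarith [sq_nonneg (a - b)]
  have h1 : (1/4 : ℝ) ^ ρ ≤ (a * b) ^ ρ :=
    Real.rpow_le_rpow_of_nonpos (by positivity) hAB hρ.le
  have h2 : (a * b) ^ ρ = a ^ ρ * b ^ ρ := Real.mul_rpow ha.le hb.le
  have h3 : ((1/4 : ℝ)) ^ ρ = ((1/2 : ℝ) ^ ρ) ^ (2 : ℕ) := by
    rw [← Real.rpow_natCast ((1/2 : ℝ) ^ ρ) 2, ← Real.rpow_mul (by norm_num), mul_comm,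
      Real.rpow_mul (by norm_num), Real.rpow_natCast]
    norm_num
  have hc : (0:ℝ) < (1/2 : ℝ) ^ ρ := Real.rpow_pos_of_pos (by norm_num) ρ
  have hA : (0:ℝ) < a ^ ρ := Real.rpow_pos_of_pos ha ρ
  have hB : (0:ℝ) < b ^ ρ := Real.rpow_pos_of_pos hb ρ
  nlinarith [sq_nonneg (a ^ ρ - b ^ ρ)]

open Filter Set Topology in
private lemma aux_exists_t (ρ : ℝ) (hρ0 : ρ ≠ 0) :
    ∃ t : ℝ, 1/3 < t ∧ t < 1/2 ∧
      (0 < ρ → 5 * (1/2 : ℝ) ^ ρ < 3 * (1 - t) ^ ρ + 2 * t ^ ρ) ∧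
      (ρ < 0 → 3 * (1 - t) ^ ρ + 2 * t ^ ρ < 5 * (1/2 : ℝ) ^ ρ) := by
  set F : ℝ → ℝ := fun s => 3 * (1 - s) ^ ρ + 2 * s ^ ρ with hF
  have h1 : HasDerivAt (fun s : ℝ => 1 - s) (-1) (1/2) := by
    simpa using (hasDerivAt_id (1/2 : ℝ)).const_sub 1
  have h2 : HasDerivAt (fun s : ℝ => (1 - s) ^ ρ) ((-1) * ρ * (1/2 : ℝ) ^ (ρ - 1)) (1/2) := by
    have := h1.rpow_const (p := ρ) (Or.inl (by norm_num))
    convert this using 2 <;> norm_num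
  have h3 : HasDerivAt (fun s : ℝ => s ^ ρ) (1 * ρ * (1/2 : ℝ) ^ (ρ - 1)) (1/2) := by
    have := (hasDerivAt_id (1/2 : ℝ)).rpow_const (p := ρ) (Or.inl (by norm_num))
    convert this using 2 <;> norm_num
  set d : ℝ := -(ρ * (1/2 : ℝ) ^ (ρ - 1)) with hd
  have hder : HasDerivAt F d (1/2) := by
    have := (h2.const_mul 3).add (h3.const_mul 2)
    exact this.congr_deriv (by rw [hd]; ring)
  have hpow : (0:ℝ) < (1/2 : ℝ) ^ (ρ - 1) := Real.rpow_pos_of_pos (by norm_num) _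
  have hslope := hasDerivAt_iff_tendsto_slope.mp hder
  have hFt : ∀ r : ℝ, F r = 3 * (1 - r) ^ ρ + 2 * r ^ ρ := fun r => rfl
  clear_value d
  have hmono : 𝓝[<] (1/2 : ℝ) ≤ 𝓝[≠] (1/2 : ℝ) :=
    nhdsWithin_mono _ (fun y hy => ne_of_lt hy)
  have hIoo : ∀ᶠ s in 𝓝[<] (1/2 : ℝ), s ∈ Ioo (1/3 : ℝ) (1/2) :=
    Ioo_mem_nhdsLT_of_mem (by norm_num)
  have hF12 : F (1/2) = 5 * (1/2 : ℝ) ^ ρ := by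
    show 3 * (1 - 1/2 : ℝ) ^ ρ + 2 * (1/2 : ℝ) ^ ρ = 5 * (1/2 : ℝ) ^ ρ
    norm_num; ring
  rcases lt_or_gt_of_ne hρ0 with hneg | hpos
  · have hdpos : 0 < d := by rw [hd]; nlinarith
    have hev : ∀ᶠ s in 𝓝[≠] (1/2 : ℝ), d/2 < slope F (1/2) s :=
      hslope.eventually_const_lt (by linarith)
    obtain ⟨t, ht1, ht2⟩ := ((hev.filter_mono hmono).and hIoo).exists
    refine ⟨t, ht2.1, ht2.2, fun h => absurd h (not_lt.mpr hneg.le), fun _ => ?_⟩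
    rw [slope_def_field] at ht1
    have htlt : t - 1/2 < 0 := by linarith [ht2.2]
    have hmul : F t - F (1/2) < (d/2) * (t - 1/2) := (lt_div_iff_of_neg htlt).mp ht1
    have hneg2 : d / 2 * (t - 1/2) < 0 := mul_neg_of_pos_of_neg (by linarith) htlt
    have := hFt t
    linarith
  · have hdneg : d < 0 := by rw [hd]; nlinarith
    have hev : ∀ᶠ s in 𝓝[≠] (1/2 : ℝ), slope F (1/2) s < d/2 :=
      hslope.eventually_lt_const (by linarith)
    obtain ⟨t, ht1, ht2⟩ := ((hev.filter_mono hmono).and hIoo).exists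
    refine ⟨t, ht2.1, ht2.2, fun _ => ?_, fun h => absurd h (not_lt.mpr hpos.le)⟩
    rw [slope_def_field] at ht1
    have htlt : t - 1/2 < 0 := by linarith [ht2.2]
    have hmul : (d/2) * (t - 1/2) < F t - F (1/2) := (div_lt_iff_of_neg htlt).mp ht1
    have hpos2 : 0 < d / 2 * (t - 1/2) := mul_pos_of_neg_of_neg (by linarith) htlt
    have := hFt t
    linarith

private lemma aux_vec7_five {α : Type*} (a b c d e f g : α) : ![a,b,c,d,e,f,g] 5 = f := rfl
private lemma aux_vec7_six {α : Type*} (a b c d e f g : α) : ![a,b,c,d,e,f,g] 6 = g := rfl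

private lemma aux_y_alloc (t : ℝ) (ht1 : 1/3 ≤ t) (ht2 : t ≤ 1/2) :
    ∃ y : Fin 5 → Fin 7 → ℝ,
      validAlloc (fun j => if j = (6 : Fin 7) then (2:ℝ) else 1) y ∧
      util (![{0, 1, 6}, {2, 3, 6}, {4, 5, 6}, {0, 2, 4}, {1, 3, 5}] :
        Fin 5 → Finset (Fin 7)) y = ![1 - t, 1 - t, 1 - t, t, t] := by
  refine ⟨![![1-t, 1-t, 0, 0, 0, 0, 1-t], ![0, 0, 1-t, 1-t, 0, 0, 1-t],
    ![0, 0, 0, 0, 1-t, 1-t, 1-t], ![t, 0, t, 0, t, 0, 0], ![0, t, 0, t, 0, t, 0]],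
    ⟨?_, ?_⟩, ?_⟩
  · intro i j
    fin_cases i <;> fin_cases j <;>
      simp [aux_vec7_five, aux_vec7_six, Matrix.vecHead, Matrix.vecTail] <;> linarith
  · intro j
    fin_cases j <;>
      simp [Fin.sum_univ_five, aux_vec7_five, aux_vec7_six, Matrix.vecHead, Matrix.vecTail] <;>
      norm_num <;> linarith
  · funext i
    fin_cases i <;>
      · show bundleUtil _ _ = _
        refine aux_bundleUtil_eq (by decide) ?_
        intro j hj
        fin_cases hj <;> simp [aux_vec7_five, aux_vec7_six]

/-- Lemma truthful: in the 5-agent, 7-good instance (goods indexed 0–6,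
good 7 of the paper is index 6, with supply 2; all other supplies 1), for every
`ρ ≤ 1`, every CES-welfare-maximizing allocation gives agent 4 (index 3) utility
strictly below 1/2. -/
theorem truthful_less_half (ρ : ℝ) (hρ : ρ ≤ 1) (x : Fin 5 → Fin 7 → ℝ)
    (hx : maxCES ρ (fun j => if j = (6 : Fin 7) then 2 else 1)
      (![{0, 1, 6}, {2, 3, 6}, {4, 5, 6}, {0, 2, 4}, {1, 3, 5}] :
        Fin 5 → Finset (Fin 7)) x) :
    util (![{0, 1, 6}, {2, 3, 6}, {4, 5, 6}, {0, 2, 4}, {1, 3, 5}] :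
        Fin 5 → Finset (Fin 7)) x 3 < 1 / 2 := by
  by_contra hcon
  push_neg at hcon
  obtain ⟨⟨hxnn, hxs⟩, hmax⟩ := hx
  set R : Fin 5 → Finset (Fin 7) :=
    (![{0, 1, 6}, {2, 3, 6}, {4, 5, 6}, {0, 2, 4}, {1, 3, 5}] : Fin 5 → Finset (Fin 7)) with hR
  have u_nn : ∀ i : Fin 5, 0 ≤ util R x i := by
    intro i
    refine aux_le_bundleUtil ?_ fun j _ => hxnn i j
    fin_cases i <;> decide
  have hle : ∀ (i : Fin 5) (j : Fin 7), j ∈ R i → util R x i ≤ x i j :=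
    fun i j hj => aux_bundleUtil_le hj
  have hs1 : x 0 1 + x 1 1 + x 2 1 + x 3 1 + x 4 1 ≤ 1 := by
    have := hxs 1
    rw [Fin.sum_univ_five] at this
    simpa using this
  have hs2 : x 0 2 + x 1 2 + x 2 2 + x 3 2 + x 4 2 ≤ 1 := by
    have := hxs 2
    rw [Fin.sum_univ_five] at this
    simpa using this
  have hs4 : x 0 4 + x 1 4 + x 2 4 + x 3 4 + x 4 4 ≤ 1 := by
    have := hxs 4
    rw [Fin.sum_univ_five] at this
    simpa using this
  have h04 : util R x 0 + util R x 4 ≤ 1 := by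
    have a := hle 0 1 (by decide)
    have b := hle 4 1 (by decide)
    linarith [hxnn 1 1, hxnn 2 1, hxnn 3 1]
  have h13 : util R x 1 + util R x 3 ≤ 1 := by
    have a := hle 1 2 (by decide)
    have b := hle 3 2 (by decide)
    linarith [hxnn 0 2, hxnn 2 2, hxnn 4 2]
  have h23 : util R x 2 + util R x 3 ≤ 1 := by
    have a := hle 2 4 (by decide)
    have b := hle 3 4 (by decide)
    linarith [hxnn 0 4, hxnn 1 4, hxnn 4 4]
  have hu2 : util R x 2 ≤ 1/2 := by linarith
  rcases eq_or_ne ρ 0 with rfl | hρ0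
  · -- Nash welfare case
    obtain ⟨y, hyv, hyu⟩ := aux_y_alloc (2/5) (by norm_num) (by norm_num)
    have hmaxy := hmax y hyv
    simp only [ces, if_pos rfl] at hmaxy
    rw [hyu, Fin.prod_univ_five] at hmaxy
    norm_num at hmaxy
    have hb04 : util R x 0 * util R x 4 ≤ 1/4 := by
      nlinarith [sq_nonneg (util R x 0 - util R x 4), u_nn 0, u_nn 4]
    have hb13 : util R x 1 * util R x 3 ≤ 1/4 := by
      nlinarith [sq_nonneg (util R x 1 - util R x 3), u_nn 1, u_nn 3]
    have hA : (util R x 0 * util R x 4) * (util R x 1 * util R x 3) ≤ (1/4) * (1/4) :=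
      mul_le_mul hb04 hb13 (mul_nonneg (u_nn 1) (u_nn 3)) (by norm_num)
    have hB : ((util R x 0 * util R x 4) * (util R x 1 * util R x 3)) * util R x 2
        ≤ ((1/4) * (1/4)) * (1/2) :=
      mul_le_mul hA hu2 (u_nn 2) (by norm_num)
    have hprod : ∏ i, util R x i ≤ 1/32 := by
      rw [Fin.prod_univ_five]
      nlinarith [hB]
    simp [Matrix.cons_val_two, Matrix.cons_val_three, Matrix.cons_val_four] at hmaxy
    linarith
  · obtain ⟨t, ht1, ht2, ht3, ht4⟩ := aux_exists_t ρ hρ0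
    obtain ⟨y, hyv, hyu⟩ := aux_y_alloc t ht1.le ht2.le
    have hmaxy := hmax y hyv
    have hsumy : (∑ i, util R y i ^ ρ) = 3 * (1 - t) ^ ρ + 2 * t ^ ρ := by
      rw [hyu, Fin.sum_univ_five]
      show (1-t) ^ ρ + (1-t) ^ ρ + (1-t) ^ ρ + t ^ ρ + t ^ ρ = 3 * (1 - t) ^ ρ + 2 * t ^ ρ
      ring
    have hynz : ¬ (ρ < 0 ∧ ∃ i, util R y i = 0) := by
      rintro ⟨-, i, hi⟩
      rw [hyu] at hi
      fin_cases i <;> simp at hi <;> linarith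
    have hcesy : ces ρ (util R y) = (3 * (1 - t) ^ ρ + 2 * t ^ ρ) ^ (1/ρ) := by
      simp only [ces]
      rw [if_neg hρ0, if_neg hynz, hsumy]
    have hFt_pos : (0:ℝ) < 3 * (1 - t) ^ ρ + 2 * t ^ ρ := by
      have k1 := Real.rpow_pos_of_pos (show (0:ℝ) < 1 - t by linarith) ρ
      have k2 := Real.rpow_pos_of_pos (show (0:ℝ) < t by linarith) ρ
      linarith
    rcases lt_or_gt_of_ne hρ0 with hneg | hpos
    · -- ρ < 0
      by_cases hz : ∃ i, util R x i = 0
      · have hcesx : ces ρ (util R x) = 0 := by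
          simp only [ces]
          rw [if_neg hρ0, if_pos ⟨hneg, hz⟩]
        rw [hcesx, hcesy] at hmaxy
        have := Real.rpow_pos_of_pos hFt_pos (1/ρ)
        linarith
      · push_neg at hz
        have u_pos : ∀ i, 0 < util R x i := fun i => (u_nn i).lt_of_ne (Ne.symm (hz i))
        have hsumx : 5 * (1/2:ℝ) ^ ρ ≤ ∑ i, util R x i ^ ρ := by
          rw [Fin.sum_univ_five]
          have p1 := aux_pair_rpow_ge hneg (u_pos 0) (u_pos 4) h04
          have p2 := aux_pair_rpow_ge hneg (u_pos 1) (u_pos 3) h13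
          have p3 : (1/2:ℝ) ^ ρ ≤ util R x 2 ^ ρ :=
            Real.rpow_le_rpow_of_nonpos (u_pos 2) hu2 hneg.le
          linarith
        have hcesx : ces ρ (util R x) = (∑ i, util R x i ^ ρ) ^ (1/ρ) := by
          simp only [ces]
          rw [if_neg hρ0, if_neg (by rintro ⟨-, i, hi⟩; exact hz i hi)]
        have hlt : (∑ i, util R x i ^ ρ) ^ (1/ρ) < (3 * (1 - t) ^ ρ + 2 * t ^ ρ) ^ (1/ρ) :=
          Real.rpow_lt_rpow_of_neg hFt_pos (lt_of_lt_of_le (ht4 hneg) hsumx)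
            (one_div_neg.mpr hneg)
        rw [hcesx, hcesy] at hmaxy
        linarith
    · -- 0 < ρ
      have hsumx_nn : 0 ≤ ∑ i, util R x i ^ ρ :=
        Finset.sum_nonneg fun i _ => Real.rpow_nonneg (u_nn i) ρ
      have hsumx : ∑ i, util R x i ^ ρ ≤ 5 * (1/2:ℝ) ^ ρ := by
        rw [Fin.sum_univ_five]
        have p1 := aux_pair_rpow_le hpos hρ (u_nn 0) (u_nn 4) h04
        have p2 := aux_pair_rpow_le hpos hρ (u_nn 1) (u_nn 3) h13
        have p3 : util R x 2 ^ ρ ≤ (1/2:ℝ) ^ ρ :=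
          Real.rpow_le_rpow (u_nn 2) hu2 hpos.le
        linarith
      have hcesx : ces ρ (util R x) = (∑ i, util R x i ^ ρ) ^ (1/ρ) := by
        simp only [ces]
        rw [if_neg hρ0, if_neg (fun h => absurd h.1 (not_lt.mpr hpos.le))]
      have hlt : (∑ i, util R x i ^ ρ) ^ (1/ρ) < (3 * (1 - t) ^ ρ + 2 * t ^ ρ) ^ (1/ρ) :=
        Real.rpow_lt_rpow hsumx_nn (lt_of_le_of_lt hsumx (ht3 hpos)) (one_div_pos.mpr hpos)
      rw [hcesx, hcesy] at hmaxy
      linarith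


end BandwidthAlloc
end
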